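/- Let ∇ ⊂ ℝ⁴ be defined by the inequalities 0 ≤ x ≤ 1, 0 ≤ y ≤ 1, z ≥ 0, w ≥ 0, 1-z-w ≥ 0, x+y-z-w ≥ 0, 1-x-y+z ≥ 0. Then ∇ has exactly eight lattice points, and for every positive integer n the number of lattice points in n∇ equals C(n+4,4) + 3·C(n+3,4) + 2·C(n+2,4) = (6n⁴ + 32n³ + 66n² + 64n + 24)/24. -/

import Mathlib

open Pointwise

def nabla : Set (ℝ × ℝ × ℝ × ℝ) :=
  {p : ℝ × ℝ × ℝ × ℝ |
    0 ≤ p.1 ∧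
    p.1 ≤ 1 ∧
    0 ≤ p.2.1 ∧
    p.2.1 ≤ 1 ∧
    0 ≤ p.2.2.1 ∧
    0 ≤ p.2.2.2 ∧
    0 ≤ 1 - p.2.2.1 - p.2.2.2 ∧
    0 ≤ p.1 + p.2.1 - p.2.2.1 - p.2.2.2 ∧
    0 ≤ 1 - p.1 - p.2.1 + p.2.2.1}

namespace Stmt15Aux

open Finset

def tri (k : ℕ) : ℕ := ∑ i ∈ Finset.range k, (i+1)
def pyr (m : ℕ) : ℕ := ∑ k ∈ Finset.range m, tri (k+1)

lemma tri_mul (k : ℕ) : 2 * tri k = k * (k+1) := by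
  induction k with
  | zero => simp [tri]
  | succ m ih => simp only [tri, Finset.sum_range_succ] at *; nlinarith [ih]

lemma pyr_mul (m : ℕ) : 6 * pyr m = m*(m+1)*(m+2) := by
  induction m with
  | zero => simp [pyr]
  | succ k ih =>
    have h := tri_mul (k+1)
    simp only [pyr, Finset.sum_range_succ] at *
    nlinarith [ih, h]

lemma sum_pyr (m : ℕ) : 24 * ∑ x ∈ Finset.range (m+1), pyr x = m*(m+1)*(m+2)*(m+3) := by
  induction m with
  | zero => simp [pyr]
  | succ k ih =>
    have h := pyr_mul (k+1)
    rw [Finset.sum_range_succ]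
    nlinarith [ih, h]

lemma choose4 (a : ℕ) : (a+4).choose 4 * 24 = (a+1)*(a+2)*(a+3)*(a+4) := by
  have h := Nat.choose_mul_factorial_mul_factorial (show 4 ≤ a+4 by omega)
  have h2 : (a+4) - 4 = a := by omega
  rw [h2] at h
  have h3 : (a+4).factorial = (a+1)*(a+2)*(a+3)*(a+4) * a.factorial := by
    show (a+3+1).factorial = _
    rw [Nat.factorial_succ, Nat.factorial_succ, Nat.factorial_succ, Nat.factorial_succ]
    ring
  rw [h3] at h
  have h4 : Nat.factorial 4 = 24 := rfl
  rw [h4] at h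
  have := Nat.factorial_pos a
  nlinarith [h]

lemma choose3 (a : ℕ) : (a+3).choose 4 * 24 = a*(a+1)*(a+2)*(a+3) := by
  cases a with
  | zero => decide
  | succ b => have := choose4 b; rw [show b+1+3 = b+4 by omega]; nlinarith [this]

def Fn (n : ℕ) : Finset (ℕ×ℕ×ℕ×ℕ) :=
  ((range (n+1)) ×ˢ (range (n+1)) ×ˢ (range (n+1)) ×ˢ (range (n+1))).filter
    (fun v => v.2.2.1 + v.2.2.2 ≤ n ∧ v.2.2.1 + v.2.2.2 ≤ v.1 + v.2.1 ∧ v.1 + v.2.1 ≤ n + v.2.2.1)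

lemma wsum (n x y z : ℕ) (hz : z ≤ n) :
    (∑ w ∈ range (n+1), if z + w ≤ n ∧ z + w ≤ x + y ∧ x + y ≤ n + z then 1 else 0)
      = if z ≤ x + y ∧ x + y ≤ n + z then min n (x+y) - z + 1 else 0 := by
  rw [← Finset.card_filter]
  split_ifs with h
  · have : (range (n+1)).filter (fun w => z + w ≤ n ∧ z + w ≤ x + y ∧ x + y ≤ n + z)
        = range (min n (x+y) - z + 1) := by
      ext w; simp only [mem_filter, mem_range]; omega
    rw [this, card_range]
  · have : (range (n+1)).filter (fun w => z + w ≤ n ∧ z + w ≤ x + y ∧ x + y ≤ n + z) = ∅ := by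
      ext w; simp only [mem_filter, mem_range, notMem_empty, iff_false]; omega
    rw [this, card_empty]

lemma zsum (n s : ℕ) (hs : s ≤ 2*n) :
    (∑ z ∈ range (n+1), if z ≤ s ∧ s ≤ n + z then min n s - z + 1 else 0)
      = tri (min n s - (s - n) + 1) := by
  rw [← Finset.sum_filter]
  have hf : (range (n+1)).filter (fun z => z ≤ s ∧ s ≤ n + z) = Finset.Icc (s - n) (min n s) := by
    ext z; simp only [mem_filter, mem_range, mem_Icc]; omega
  rw [hf, ← Finset.Ico_add_one_right_eq_Icc, Finset.sum_Ico_eq_sum_range]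
  have hK : min n s + 1 - (s - n) = min n s - (s - n) + 1 := by omega
  rw [hK]
  rw [tri, ← Finset.sum_range_reflect]
  apply Finset.sum_congr rfl
  intro i hi; simp only [mem_range] at hi; omega

lemma ysum (n x : ℕ) (hx : x ≤ n) :
    (∑ y ∈ range (n+1), tri (min n (x+y) - ((x+y) - n) + 1)) + pyr x + pyr (n - x)
      = pyr (n+1) + pyr n := by
  have hsplit : ∑ y ∈ range (n+1), tri (min n (x+y) - ((x+y) - n) + 1)
      = (∑ y ∈ Finset.Ico 0 (n-x+1), tri (min n (x+y) - ((x+y) - n) + 1))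
        + ∑ y ∈ Finset.Ico (n-x+1) (n+1), tri (min n (x+y) - ((x+y) - n) + 1) := by
    rw [Finset.range_eq_Ico, ← Finset.sum_Ico_consecutive _ (by omega : 0 ≤ n-x+1) (by omega : n-x+1 ≤ n+1)]
  have hS1 : (∑ y ∈ Finset.Ico 0 (n-x+1), tri (min n (x+y) - ((x+y) - n) + 1)) + pyr x = pyr (n+1) := by
    rw [Finset.sum_Ico_eq_sum_range]
    have e1 : ∀ i ∈ range (n-x+1-0), tri (min n (x+(0+i)) - ((x+(0+i)) - n) + 1) = tri (x+i+1) := by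
      intro i hi; simp only [mem_range] at hi; congr 1; omega
    rw [Finset.sum_congr rfl e1]
    have e2 : pyr (n+1) = pyr x + ∑ k ∈ Finset.Ico x (n+1), tri (k+1) := by
      rw [pyr, Finset.range_eq_Ico, ← Finset.sum_Ico_consecutive _ (by omega : 0 ≤ x) (by omega : x ≤ n+1)]
      congr 1
      rw [pyr, Finset.range_eq_Ico]
    rw [e2, Finset.sum_Ico_eq_sum_range]
    have : n-x+1-0 = n+1-x := by omega
    rw [this]; omega
  have hS2 : (∑ y ∈ Finset.Ico (n-x+1) (n+1), tri (min n (x+y) - ((x+y) - n) + 1)) + pyr (n-x) = pyr n := by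
    rw [Finset.sum_Ico_eq_sum_range]
    have hw : n+1-(n-x+1) = x := by omega
    rw [hw]
    have e1 : ∀ i ∈ range x, tri (min n (x+(n-x+1+i)) - ((x+(n-x+1+i)) - n) + 1) = tri (n-i) := by
      intro i hi; simp only [mem_range] at hi; congr 1; omega
    rw [Finset.sum_congr rfl e1]
    have e2 : pyr n = pyr (n-x) + ∑ k ∈ Finset.Ico (n-x) n, tri (k+1) := by
      rw [pyr, Finset.range_eq_Ico, ← Finset.sum_Ico_consecutive _ (by omega : 0 ≤ n-x) (by omega : n-x ≤ n)]
      congr 1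
      rw [pyr, Finset.range_eq_Ico]
    rw [e2, Finset.sum_Ico_eq_sum_range]
    have e3 : ∑ i ∈ range x, tri (n-i) = ∑ i ∈ range (n-(n-x)), tri (n-x+i+1) := by
      have hx2 : n-(n-x) = x := by omega
      rw [hx2, ← Finset.sum_range_reflect (fun i => tri (n-x+i+1)) x]
      refine Finset.sum_congr rfl fun i hi => ?_
      simp only [mem_range] at hi; congr 1; omega
    rw [e3]; omega
  omega

lemma card_Fn (n : ℕ) :
    (Fn n).card + 2*(∑ x ∈ range (n+1), pyr x) = (n+1) * (pyr (n+1) + pyr n) := by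
  have h1 : (Fn n).card = ∑ x ∈ range (n+1), ∑ y ∈ range (n+1),
      tri (min n (x+y) - ((x+y) - n) + 1) := by
    rw [Fn, Finset.card_filter, Finset.sum_product]
    refine Finset.sum_congr rfl fun x hx => ?_
    rw [Finset.sum_product]
    refine Finset.sum_congr rfl fun y hy => ?_
    rw [Finset.sum_product]
    simp only [mem_range] at hx hy
    calc ∑ z ∈ range (n+1), ∑ w ∈ range (n+1),
          (if z + w ≤ n ∧ z + w ≤ x + y ∧ x + y ≤ n + z then 1 else 0)
        = ∑ z ∈ range (n+1), (if z ≤ x + y ∧ x + y ≤ n + z then min n (x+y) - z + 1 else 0) := by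
          refine Finset.sum_congr rfl fun z hz => ?_
          simp only [mem_range] at hz
          exact wsum n x y z (by omega)
      _ = tri (min n (x+y) - ((x+y) - n) + 1) := zsum n (x+y) (by omega)
  rw [h1]
  have h2 : ∑ x ∈ range (n+1), ((∑ y ∈ range (n+1), tri (min n (x+y) - ((x+y) - n) + 1))
      + pyr x + pyr (n-x)) = (n+1) * (pyr (n+1) + pyr n) := by
    rw [Finset.sum_congr rfl (fun x hx => ysum n x (by simp only [mem_range] at hx; omega))]
    simp [mul_comm]
  have h3 : ∑ x ∈ range (n+1), pyr (n-x) = ∑ x ∈ range (n+1), pyr x := by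
    have := Finset.sum_range_reflect (fun i => pyr i) (n+1)
    simpa using this
  simp only [Finset.sum_add_distrib, h3] at h2
  omega

lemma mem_nabla_int (a b c d : ℤ) :
    (((a:ℝ), (b:ℝ), (c:ℝ), (d:ℝ)) ∈ nabla) ↔
      (0 ≤ a ∧ a ≤ 1 ∧ 0 ≤ b ∧ b ≤ 1 ∧ 0 ≤ c ∧ 0 ≤ d ∧ c + d ≤ 1 ∧ c + d ≤ a + b ∧ a + b ≤ 1 + c) := by
  simp only [nabla, Set.mem_setOf_eq, sub_nonneg]
  constructor
  · rintro ⟨h1, h2, h3, h4, h5, h6, h7, h8, h9⟩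
    refine ⟨by exact_mod_cast h1, by exact_mod_cast h2, by exact_mod_cast h3, by exact_mod_cast h4,
      by exact_mod_cast h5, by exact_mod_cast h6, ?_, ?_, ?_⟩
    · have : (c:ℝ) + d ≤ 1 := by linarith
      exact_mod_cast this
    · have : (c:ℝ) + d ≤ a + b := by linarith
      exact_mod_cast this
    · have : (a:ℝ) + b ≤ 1 + c := by linarith
      exact_mod_cast this
  · rintro ⟨h1, h2, h3, h4, h5, h6, h7, h8, h9⟩
    have h7' : (c:ℝ) + d ≤ 1 := by exact_mod_cast h7
    have h8' : (c:ℝ) + d ≤ a + b := by exact_mod_cast h8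
    have h9' : (a:ℝ) + b ≤ 1 + c := by exact_mod_cast h9
    refine ⟨by exact_mod_cast h1, by exact_mod_cast h2, by exact_mod_cast h3, by exact_mod_cast h4,
      by exact_mod_cast h5, by exact_mod_cast h6, by linarith, by linarith, by linarith⟩

lemma mem_smul_nabla_int (n : ℕ) (hn : 0 < n) (a b c d : ℤ) :
    (((a:ℝ), (b:ℝ), (c:ℝ), (d:ℝ)) ∈ (n:ℝ) • nabla) ↔
      (0 ≤ a ∧ a ≤ n ∧ 0 ≤ b ∧ b ≤ n ∧ 0 ≤ c ∧ 0 ≤ d ∧ c + d ≤ n ∧ c + d ≤ a + b ∧ a + b ≤ n + c) := by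
  have hN : (0:ℝ) < n := by exact_mod_cast hn
  rw [Set.mem_smul_set]
  constructor
  · rintro ⟨⟨x, y, z, w⟩, ⟨h1, h2, h3, h4, h5, h6, h7, h8, h9⟩, hq⟩
    simp only [Prod.smul_mk, smul_eq_mul, Prod.mk.injEq] at hq
    obtain ⟨ea, eb, ec, ed⟩ := hq
    have ka : (a:ℝ) = n * x := ea.symm
    have kb : (b:ℝ) = n * y := eb.symm
    have kc : (c:ℝ) = n * z := ec.symm
    have kd : (d:ℝ) = n * w := ed.symm
    constructor
    · have : (0:ℝ) ≤ a := by rw [ka]; positivity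
      exact_mod_cast this
    constructor
    · have : (a:ℝ) ≤ n := by rw [ka]; nlinarith
      exact_mod_cast this
    constructor
    · have : (0:ℝ) ≤ b := by rw [kb]; positivity
      exact_mod_cast this
    constructor
    · have : (b:ℝ) ≤ n := by rw [kb]; nlinarith
      exact_mod_cast this
    constructor
    · have : (0:ℝ) ≤ c := by rw [kc]; positivity
      exact_mod_cast this
    constructor
    · have : (0:ℝ) ≤ d := by rw [kd]; positivity
      exact_mod_cast this
    constructor
    · have : (c:ℝ) + d ≤ n := by rw [kc, kd]; nlinarith
      exact_mod_cast this
    constructor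
    · have : (c:ℝ) + d ≤ a + b := by rw [ka, kb, kc, kd]; nlinarith
      exact_mod_cast this
    · have : (a:ℝ) + b ≤ n + c := by rw [ka, kb, kc]; nlinarith
      exact_mod_cast this
  · rintro ⟨h1, h2, h3, h4, h5, h6, h7, h8, h9⟩
    have h1' : (0:ℝ) ≤ a := by exact_mod_cast h1
    have h2' : (a:ℝ) ≤ n := by exact_mod_cast h2
    have h3' : (0:ℝ) ≤ b := by exact_mod_cast h3
    have h4' : (b:ℝ) ≤ n := by exact_mod_cast h4
    have h5' : (0:ℝ) ≤ c := by exact_mod_cast h5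
    have h6' : (0:ℝ) ≤ d := by exact_mod_cast h6
    have h7' : (c:ℝ) + d ≤ n := by exact_mod_cast h7
    have h8' : (c:ℝ) + d ≤ a + b := by exact_mod_cast h8
    have h9' : (a:ℝ) + b ≤ n + c := by exact_mod_cast h9
    refine ⟨((a:ℝ)/n, (b:ℝ)/n, (c:ℝ)/n, (d:ℝ)/n), ?_, ?_⟩
    · refine ⟨by positivity, by rw [div_le_one hN]; exact h2', by positivity,
        by rw [div_le_one hN]; exact h4', by positivity, by positivity, ?_, ?_, ?_⟩
      · have e : (1:ℝ) - c/n - d/n = (n - c - d)/n := by field_simp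
        rw [e]; apply div_nonneg (by linarith) hN.le
      · have e : (a:ℝ)/n + b/n - c/n - d/n = (a + b - c - d)/n := by field_simp
        rw [e]; apply div_nonneg (by linarith) hN.le
      · have e : (1:ℝ) - a/n - b/n + c/n = (n - a - b + c)/n := by field_simp
        rw [e]; apply div_nonneg (by linarith) hN.le
    · simp only [Prod.smul_mk, smul_eq_mul, Prod.mk.injEq]
      refine ⟨?_, ?_, ?_, ?_⟩ <;> field_simp

def emb : (ℕ×ℕ×ℕ×ℕ) ↪ (ℤ×ℤ×ℤ×ℤ) :=
  ⟨fun v => ((v.1 : ℤ), (v.2.1 : ℤ), (v.2.2.1 : ℤ), (v.2.2.2 : ℤ)), by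
    rintro ⟨a, b, c, d⟩ ⟨a', b', c', d'⟩ h
    simp only [Prod.mk.injEq] at h ⊢
    omega⟩

lemma set_eq (n : ℕ) (hn : 0 < n) :
    {v : ℤ × ℤ × ℤ × ℤ | (((v.1 : ℝ), (v.2.1 : ℝ), (v.2.2.1 : ℝ), (v.2.2.2 : ℝ)) : ℝ × ℝ × ℝ × ℝ) ∈ (n : ℝ) • nabla}
      = ↑((Fn n).map emb) := by
  ext ⟨a, b, c, d⟩
  simp only [Set.mem_setOf_eq, Finset.coe_map, Set.mem_image, Finset.mem_coe]
  rw [mem_smul_nabla_int n hn a b c d]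
  constructor
  · rintro ⟨h1, h2, h3, h4, h5, h6, h7, h8, h9⟩
    refine ⟨(a.toNat, b.toNat, c.toNat, d.toNat), ?_, ?_⟩
    · simp only [Fn, Finset.mem_filter, Finset.mem_product, Finset.mem_range]
      omega
    · simp only [emb, Function.Embedding.coeFn_mk, Prod.mk.injEq]
      change ((a.toNat : ℤ), (b.toNat : ℤ), (c.toNat : ℤ), (d.toNat : ℤ)) = (a, b, c, d)
      simp only [Prod.mk.injEq]
      omega
  · rintro ⟨⟨p, q, r, t⟩, hmem, heq⟩
    simp only [Fn, Finset.mem_filter, Finset.mem_product, Finset.mem_range] at hmem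
    simp only [emb, Function.Embedding.coeFn_mk, Prod.mk.injEq] at heq
    change ((p : ℤ), (q : ℤ), (r : ℤ), (t : ℤ)) = (a, b, c, d) at heq
    simp only [Prod.mk.injEq] at heq
    omega

end Stmt15Aux

open Stmt15Aux in
theorem stmt15 :
    ({v : ℤ × ℤ × ℤ × ℤ | (((v.1 : ℝ), (v.2.1 : ℝ), (v.2.2.1 : ℝ), (v.2.2.2 : ℝ)) : ℝ × ℝ × ℝ × ℝ) ∈ nabla}.ncard = 8) ∧
      ∀ n : ℕ, 0 < n →
        {v : ℤ × ℤ × ℤ × ℤ | (((v.1 : ℝ), (v.2.1 : ℝ), (v.2.2.1 : ℝ), (v.2.2.2 : ℝ)) : ℝ × ℝ × ℝ × ℝ) ∈ (n : ℝ) • nabla}.ncard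
            = Nat.choose (n + 4) 4 + 3 * Nat.choose (n + 3) 4 + 2 * Nat.choose (n + 2) 4 ∧
          ((Nat.choose (n + 4) 4 + 3 * Nat.choose (n + 3) 4 + 2 * Nat.choose (n + 2) 4 : ℚ)) = (6 * (n : ℚ) ^ 4 + 32 * (n : ℚ) ^ 3 + 66 * (n : ℚ) ^ 2 + 64 * (n : ℚ) + 24) / 24 := by
  constructor
  · have hset : {v : ℤ × ℤ × ℤ × ℤ | (((v.1 : ℝ), (v.2.1 : ℝ), (v.2.2.1 : ℝ), (v.2.2.2 : ℝ)) : ℝ × ℝ × ℝ × ℝ) ∈ nabla}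
        = ↑({((0:ℤ),(0:ℤ),(0:ℤ),(0:ℤ)),(1,0,0,0),(0,1,0,0),(1,0,1,0),(1,0,0,1),(0,1,1,0),(0,1,0,1),(1,1,1,0)} : Finset (ℤ×ℤ×ℤ×ℤ)) := by
      ext ⟨a, b, c, d⟩
      simp only [Set.mem_setOf_eq, mem_nabla_int, Finset.coe_insert, Set.mem_insert_iff,
        Finset.coe_singleton, Set.mem_singleton_iff, Prod.mk.injEq]
      omega
    rw [hset, Set.ncard_coe_finset]
    decide
  · intro n hn
    obtain ⟨m, rfl⟩ : ∃ m, n = m + 1 := ⟨n - 1, by omega⟩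
    have key : (Fn (m+1)).card
        = Nat.choose (m+1+4) 4 + 3 * Nat.choose (m+1+3) 4 + 2 * Nat.choose (m+1+2) 4 := by
      have h1 := card_Fn (m+1)
      have h2 := sum_pyr (m+1)
      have h3 := pyr_mul (m+2)
      have h4 := pyr_mul (m+1)
      have e5 := choose4 (m+1)
      have e6 := choose4 m
      have e7 := choose3 m
      have hi5 : m+1+4 = m+1+4 := rfl
      have hi6 : m+1+3 = m+4 := by omega
      have hi7 : m+1+2 = m+3 := by omega
      rw [hi6, hi7]
      have q1 : ((Fn (m+1)).card : ℚ) + 2*((∑ x ∈ Finset.range (m+1+1), pyr x : ℕ) : ℚ)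
          = ((m:ℚ)+2) * ((pyr (m+2) : ℚ) + (pyr (m+1) : ℚ)) := by exact_mod_cast h1
      have q2 : 24*((∑ x ∈ Finset.range (m+1+1), pyr x : ℕ) : ℚ)
          = ((m:ℚ)+1)*((m:ℚ)+2)*((m:ℚ)+3)*((m:ℚ)+4) := by exact_mod_cast h2
      have q3 : 6*((pyr (m+2) : ℕ) : ℚ) = ((m:ℚ)+2)*((m:ℚ)+3)*((m:ℚ)+4) := by exact_mod_cast h3
      have q4 : 6*((pyr (m+1) : ℕ) : ℚ) = ((m:ℚ)+1)*((m:ℚ)+2)*((m:ℚ)+3) := by exact_mod_cast h4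
      have q5 : ((Nat.choose (m+1+4) 4 : ℕ) : ℚ) * 24
          = ((m:ℚ)+2)*((m:ℚ)+3)*((m:ℚ)+4)*((m:ℚ)+5) := by exact_mod_cast e5
      have q6 : ((Nat.choose (m+4) 4 : ℕ) : ℚ) * 24
          = ((m:ℚ)+1)*((m:ℚ)+2)*((m:ℚ)+3)*((m:ℚ)+4) := by exact_mod_cast e6
      have q7 : ((Nat.choose (m+3) 4 : ℕ) : ℚ) * 24
          = (m:ℚ)*((m:ℚ)+1)*((m:ℚ)+2)*((m:ℚ)+3) := by exact_mod_cast e7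
      have goalQ : ((Fn (m+1)).card : ℚ)
          = ((Nat.choose (m+1+4) 4 : ℕ) : ℚ) + 3*((Nat.choose (m+4) 4 : ℕ) : ℚ)
            + 2*((Nat.choose (m+3) 4 : ℕ) : ℚ) := by
        linear_combination q1 - (1/12)*q2 + (((m:ℚ)+2)/6)*q3 + (((m:ℚ)+2)/6)*q4
          - (1/24)*q5 - (1/8)*q6 - (1/12)*q7
      exact_mod_cast goalQ
    constructor
    · rw [set_eq (m+1) (by omega), Set.ncard_coe_finset, Finset.card_map, key]
    · have e5 := choose4 (m+1)
      have e6 := choose4 m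
      have e7 := choose3 m
      have hi6 : m+1+3 = m+4 := by omega
      have hi7 : m+1+2 = m+3 := by omega
      rw [hi6, hi7, eq_div_iff (by norm_num : (24:ℚ) ≠ 0)]
      have q5 : ((Nat.choose (m+1+4) 4 : ℕ) : ℚ) * 24
          = ((m:ℚ)+2)*((m:ℚ)+3)*((m:ℚ)+4)*((m:ℚ)+5) := by exact_mod_cast e5
      have q6 : ((Nat.choose (m+4) 4 : ℕ) : ℚ) * 24
          = ((m:ℚ)+1)*((m:ℚ)+2)*((m:ℚ)+3)*((m:ℚ)+4) := by exact_mod_cast e6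
      have q7 : ((Nat.choose (m+3) 4 : ℕ) : ℚ) * 24
          = (m:ℚ)*((m:ℚ)+1)*((m:ℚ)+2)*((m:ℚ)+3) := by exact_mod_cast e7
      push_cast
      linear_combination q5 + 3*q6 + 2*q7
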